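/- Let z_1,…,z_r ∈ ℤ^d be generating vectors and n_1,…,n_r ≥ 1 integer moduli, with n = n_1⋯n_r, let A ⊂ ℤ^d be an anti-aliasing set with |A| = n, and let u : ℝ^d → ℂ be any function. Define the lattice-rule approximated Fourier coefficients û_a(h) = (1/n) · Σ_{k ∈ ℤ_{n_1}×⋯×ℤ_{n_r}} u(p_k) exp(−2πi h·p_k) for h ∈ A, and the trigonometric interpolant u_a(x) = Σ_{h ∈ A} û_a(h) exp(2πi h·x). Then u_a(p_k) = u(p_k) for every multi-index k ∈ ℤ_{n_1}×⋯×ℤ_{n_r}. -/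
import Mathlib

noncomputable section

/-- Integer dot product on `ℤ^d`. -/
def dotZ {d : ℕ} (h z : Fin d → ℤ) : ℤ := ∑ i, h i * z i

/-- Membership in the dual lattice `Λ^⊥`. -/
def InDual {d r : ℕ} (z : Fin r → Fin d → ℤ) (n : Fin r → ℕ) (h : Fin d → ℤ) : Prop :=
  ∀ j, (n j : ℤ) ∣ dotZ h (z j)

/-- The lattice point `p_k = Σ_j (k_j/n_j) z_j ∈ ℝ^d`. -/
def latPt {d r : ℕ} (z : Fin r → Fin d → ℤ) (n : Fin r → ℕ)
    (k : (j : Fin r) → Fin (n j)) : Fin d → ℝ :=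
  fun i => ∑ j, ((k j : ℝ) / (n j : ℝ)) * (z j i : ℝ)

/-- The exponential `x ↦ exp(2πi h·x)`. -/
def eFun {d : ℕ} (h : Fin d → ℤ) (x : Fin d → ℝ) : ℂ :=
  Complex.exp (2 * Real.pi * Complex.I * ∑ i, (h i : ℂ) * (x i : ℂ))

section Aux

variable {d r : ℕ} (z : Fin r → Fin d → ℤ) (n : Fin r → ℕ) [∀ j, NeZero (n j)]

lemma dotZ_sub {d : ℕ} (h h' w : Fin d → ℤ) :
    dotZ (h - h') w = dotZ h w - dotZ h' w := by
  simp [dotZ, sub_mul, Finset.sum_sub_distrib]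

/-- The character of `G = ∀ j, ZMod (n j)` attached to `h ∈ ℤ^d`. -/
def chi (h : Fin d → ℤ) : AddChar (∀ j, ZMod (n j)) ℂ where
  toFun g := ∏ j, ZMod.stdAddChar (((dotZ h (z j) : ZMod (n j))) * g j)
  map_zero_eq_one' := by simp
  map_add_eq_mul' a b := by
    rw [← Finset.prod_mul_distrib]
    refine Finset.prod_congr rfl fun j _ => ?_
    rw [Pi.add_apply, mul_add, AddChar.map_add_eq_mul]

lemma chi_apply (h : Fin d → ℤ) (g : ∀ j, ZMod (n j)) :
    chi z n h g = ∏ j, ZMod.stdAddChar (((dotZ h (z j) : ZMod (n j))) * g j) := rfl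

/-- If two `h`'s give the same character, their difference is in the dual lattice. -/
lemma inDual_of_chi_eq {h h' : Fin d → ℤ} (heq : chi z n h = chi z n h') :
    InDual z n (h - h') := by
  intro j
  classical
  have hval : ∀ (H : Fin d → ℤ), chi z n H (Pi.single j (1 : ZMod (n j)))
      = ZMod.stdAddChar ((dotZ H (z j) : ZMod (n j))) := by
    intro H
    rw [chi_apply]
    rw [Finset.prod_eq_single j
      (fun b _ hb => by simp [Pi.single_eq_of_ne hb]) (by simp)]
    simp
  have h1 : ZMod.stdAddChar ((dotZ h (z j) : ZMod (n j)))
      = ZMod.stdAddChar ((dotZ h' (z j) : ZMod (n j))) := by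
    rw [← hval h, ← hval h', heq]
  have h2 : ((dotZ h (z j) : ZMod (n j))) = ((dotZ h' (z j) : ZMod (n j))) :=
    ZMod.injective_stdAddChar h1
  have h3 : ((dotZ (h - h') (z j) : ZMod (n j))) = 0 := by
    rw [dotZ_sub]; push_cast; rw [h2]; ring
  exact (ZMod.intCast_zmod_eq_zero_iff_dvd _ _).mp h3

/-- `Σ_i h_i (p_k)_i = Σ_j k_j · (h·z_j) / n_j` over `ℂ`. -/
lemma sum_latPt (h : Fin d → ℤ) (k : (j : Fin r) → Fin (n j)) :
    ∑ i, (h i : ℂ) * ((latPt z n k i : ℝ) : ℂ)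
      = ∑ j, (k j : ℂ) * (dotZ h (z j) : ℂ) / (n j : ℂ) := by
  simp only [latPt]
  push_cast
  simp only [Finset.mul_sum]
  rw [Finset.sum_comm]
  refine Finset.sum_congr rfl fun j _ => ?_
  have : (dotZ h (z j) : ℂ) = ∑ i, (h i : ℂ) * (z j i : ℂ) := by
    push_cast [dotZ]; rfl
  rw [this, Finset.mul_sum, Finset.sum_div]
  exact Finset.sum_congr rfl fun i _ => by ring

/-- The map from multi-indices to the group `G`. -/
def toG (k : (j : Fin r) → Fin (n j)) : ∀ j, ZMod (n j) := fun j => ((k j : ℕ) : ZMod (n j))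

lemma toG_inj {k k' : (j : Fin r) → Fin (n j)} (hkk : toG n k = toG n k') : k = k' := by
  funext j
  have := congrFun hkk j
  simp only [toG] at this
  have h1 : ((k j : ℕ) : ZMod (n j)).val = ((k' j : ℕ) : ZMod (n j)).val := by rw [this]
  rw [ZMod.val_cast_of_lt (k j).isLt, ZMod.val_cast_of_lt (k' j).isLt] at h1
  exact Fin.ext h1

/-- Key bridge: products of exponentials at lattice points are character values. -/
lemma eFun_eq_chi (h : Fin d → ℤ) (k k' : (j : Fin r) → Fin (n j)) :
    eFun h (-(latPt z n k')) * eFun h (latPt z n k)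
      = chi z n h (toG n k - toG n k') := by
  rw [eFun, eFun, ← Complex.exp_add, chi_apply]
  have hrhs : ∀ j, ZMod.stdAddChar (((dotZ h (z j) : ZMod (n j)))
        * ((toG n k - toG n k') j))
      = Complex.exp (2 * Real.pi * Complex.I
          * ((dotZ h (z j) : ℂ) * ((k j : ℂ) - (k' j : ℂ)) / (n j : ℂ))) := by
    intro j
    have : ((dotZ h (z j) : ZMod (n j))) * ((toG n k - toG n k') j)
        = ((dotZ h (z j) * ((k j : ℤ) - (k' j : ℤ)) : ℤ) : ZMod (n j)) := by
      simp only [Pi.sub_apply, toG]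
      push_cast
      ring
    rw [this, ZMod.stdAddChar_coe]
    push_cast
    ring_nf
  rw [Finset.prod_congr rfl fun j _ => hrhs j, ← Complex.exp_sum]
  congr 1
  have hneg : ∑ i, (h i : ℂ) * (((-(latPt z n k')) i : ℝ) : ℂ)
      = -∑ i, (h i : ℂ) * ((latPt z n k' i : ℝ) : ℂ) := by
    rw [← Finset.sum_neg_distrib]
    refine Finset.sum_congr rfl fun i _ => ?_
    push_cast [Pi.neg_apply]
    ring
  rw [hneg, sum_latPt, sum_latPt, ← mul_add, ← Finset.sum_neg_distrib,
    ← Finset.sum_add_distrib, Finset.mul_sum]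
  exact Finset.sum_congr rfl fun j _ => by ring

end Aux

theorem interpolation_condition
    (d r : ℕ) (hr : 1 ≤ r)
    (z : Fin r → Fin d → ℤ) (n : Fin r → ℕ) (hn : ∀ j, 1 ≤ n j)
    (A : Finset (Fin d → ℤ))
    (hA : ∀ h ∈ A, ∀ h' ∈ A, h ≠ h' → ¬ InDual z n (h - h'))
    (hcard : A.card = ∏ j, n j)
    (u : (Fin d → ℝ) → ℂ)
    (k : (j : Fin r) → Fin (n j)) :
    ∑ h ∈ A,
        ((1 / (∏ j, (n j : ℂ))) *
            ∑ k' : (j : Fin r) → Fin (n j), u (latPt z n k') * eFun h (-(latPt z n k'))) *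
          eFun h (latPt z n k)
    = u (latPt z n k) := by
  classical
  haveI : ∀ j, NeZero (n j) := fun j => ⟨Nat.one_le_iff_ne_zero.mp (hn j)⟩
  set N : ℂ := ∏ j, (n j : ℂ) with hN
  have hNcard : N = ((∏ j, n j : ℕ) : ℂ) := by push_cast [hN]; rfl
  have hNne : N ≠ 0 := by
    rw [hN]
    exact Finset.prod_ne_zero_iff.mpr fun j _ =>
      Nat.cast_ne_zero.mpr (Nat.one_le_iff_ne_zero.mp (hn j))
  -- rewrite each summand using characters
  have step1 : ∀ h ∈ A,
      ((1 / N) * ∑ k' : (j : Fin r) → Fin (n j),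
          u (latPt z n k') * eFun h (-(latPt z n k'))) * eFun h (latPt z n k)
      = (1 / N) * ∑ k' : (j : Fin r) → Fin (n j),
          u (latPt z n k') * chi z n h (toG n k - toG n k') := by
    intro h _
    rw [mul_assoc, Finset.sum_mul]
    congr 1
    refine Finset.sum_congr rfl fun k' _ => ?_
    rw [mul_assoc, eFun_eq_chi]
  rw [Finset.sum_congr rfl step1, ← Finset.mul_sum, Finset.sum_comm]
  -- the characters attached to A exhaust all characters
  have hinj : Set.InjOn (chi z n) A := by
    intro h hh h' hh' heq
    by_contra hne
    exact hA h hh h' hh' hne (inDual_of_chi_eq z n heq)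
  have himage : A.image (chi z n) = (Finset.univ : Finset (AddChar (∀ j, ZMod (n j)) ℂ)) := by
    apply Finset.eq_univ_of_card
    rw [Finset.card_image_of_injOn hinj, hcard, AddChar.card_eq, Fintype.card_pi]
    exact Finset.prod_congr rfl fun j _ => (ZMod.card (n j)).symm
  have hsumchi : ∀ g : ∀ j, ZMod (n j),
      ∑ h ∈ A, chi z n h g = if g = 0 then N else 0 := by
    intro g
    have hsi := Finset.sum_image (s := A) (g := chi z n)
      (f := fun ψ : AddChar (∀ j, ZMod (n j)) ℂ => ψ g)
      (fun x hx y hy hxy => hinj hx hy hxy)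
    rw [himage] at hsi
    rw [← hsi, AddChar.sum_apply_eq_ite, Fintype.card_pi]
    congr 1
    rw [hNcard]
    push_cast
    exact Finset.prod_congr rfl fun j _ => by rw [ZMod.card]
  calc (1 / N) * ∑ k' : (j : Fin r) → Fin (n j), ∑ h ∈ A,
          u (latPt z n k') * chi z n h (toG n k - toG n k')
      = (1 / N) * ∑ k' : (j : Fin r) → Fin (n j),
          u (latPt z n k') * (if toG n k - toG n k' = 0 then N else 0) := by
        congr 1
        refine Finset.sum_congr rfl fun k' _ => ?_
        rw [← Finset.mul_sum, hsumchi]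
    _ = (1 / N) * ∑ k' : (j : Fin r) → Fin (n j),
          (if k' = k then u (latPt z n k') * N else 0) := by
        congr 1
        refine Finset.sum_congr rfl fun k' _ => ?_
        rw [mul_ite, mul_zero]
        refine if_congr ?_ rfl rfl
        rw [sub_eq_zero]
        exact ⟨fun hh => (toG_inj n hh).symm, fun hh => by rw [hh]⟩
    _ = u (latPt z n k) := by
        rw [Finset.sum_ite_eq' Finset.univ k (fun k' => u (latPt z n k') * N)]
        simp only [Finset.mem_univ, if_true]
        field_simp
end
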